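/- Let d ≥ 2 and let 𝒳 be the unit ball in ℝ^d with the uniform distribution ℙ. Let (ŵ₁, t̂₁), …, (ŵ_k, t̂_k) be any sequence with each ŵ_i a unit vector in ℝ^d and each t̂_i ∈ [0,1]. Define 𝒳^{(1)} = 𝒳 and, for i ≥ 1, 𝒳^{(i+1)} = {x ∈ 𝒳^{(i)} : |⟨ŵ_i, x⟩| < t̂_i}, and let 𝒳^{(i)}(ŵ_i, t̂_i) = {x ∈ 𝒳^{(i)} : |⟨ŵ_i, x⟩| ≥ t̂_i}. Then Σ_{i=1}^k ℙ(𝒳^{(i)}(ŵ_i, t̂_i)) ≥ 1 − (min_{1≤i≤k} t̂_i) √(4d/π). -/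

import Mathlib

open MeasureTheory ProbabilityTheory

noncomputable section

open Real
lemma gamma_ratio_le_aux (s : ℝ) (hs : 0 ≤ s) :
    Gamma (s + 3/2) ≤ Real.sqrt (s + 1) * Gamma (s + 1) := by
  have h1 : (0:ℝ) < s + 1 := by linarith
  have h2 : (0:ℝ) < s + 2 := by linarith
  have hG1 : 0 < Gamma (s + 1) := Gamma_pos_of_pos h1
  have hG2 : 0 < Gamma (s + 2) := Gamma_pos_of_pos h2
  have hconv := convexOn_log_Gamma.2 (Set.mem_Ioi.mpr h1) (Set.mem_Ioi.mpr h2)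
    (by norm_num : (0:ℝ) ≤ 1/2) (by norm_num : (0:ℝ) ≤ 1/2) (by norm_num)
  simp only [Function.comp_apply, smul_eq_mul] at hconv
  have hmid : (1/2 : ℝ) * (s+1) + (1/2 : ℝ) * (s+2) = s + 3/2 := by ring
  rw [hmid] at hconv
  have hGm : 0 < Gamma (s + 3/2) := Gamma_pos_of_pos (by linarith)
  have key : Gamma (s + 3/2) ≤ Real.sqrt (Gamma (s+1) * Gamma (s+2)) := by
    have h := Real.exp_le_exp.mpr hconv
    rw [Real.exp_log hGm] at h
    refine h.trans_eq ?_
    rw [show (1:ℝ)/2 * log (Gamma (s+1)) + 1/2 * log (Gamma (s+2))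
        = log (Gamma (s+1) * Gamma (s+2)) / 2 by rw [Real.log_mul hG1.ne' hG2.ne']; ring,
      ← Real.log_sqrt (by positivity), Real.exp_log (by positivity)]
  have hstep : Gamma (s + 2) = (s+1) * Gamma (s+1) := by
    have h := Real.Gamma_add_one (s := s+1) h1.ne'
    rw [show s + 2 = s + 1 + 1 by ring, h]
  rw [hstep, show Gamma (s+1) * ((s+1) * Gamma (s+1)) = (s+1) * (Gamma (s+1))^2 by ring,
    Real.sqrt_mul (by linarith), Real.sqrt_sq hG1.le] at key
  exact key

lemma real_ratio_aux (m : ℕ) (t : ℝ) (ht : 0 ≤ t) :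
    2*t * (Real.sqrt π ^ m / Gamma ((m:ℝ)/2 + 1))
      ≤ (t * Real.sqrt (4 * ((m:ℝ)+1) / π)) * (Real.sqrt π ^ (m+1) / Gamma (((m:ℝ)+1)/2 + 1)) := by
  have hπ : (0:ℝ) < π := pi_pos
  have hΓ1 : 0 < Gamma ((m:ℝ)/2 + 1) := Gamma_pos_of_pos (by positivity)
  have hΓ2 : 0 < Gamma ((m:ℝ)/2 + 3/2) := Gamma_pos_of_pos (by positivity)
  have hg := gamma_ratio_le_aux ((m:ℝ)/2) (by positivity)
  have h1 : Real.sqrt ((m:ℝ)/2 + 1) ≤ Real.sqrt ((m:ℝ)+1) := by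
    apply Real.sqrt_le_sqrt; linarith [Nat.cast_nonneg (α := ℝ) m]
  have hg2 : Gamma ((m:ℝ)/2 + 3/2) ≤ Real.sqrt ((m:ℝ)+1) * Gamma ((m:ℝ)/2 + 1) :=
    hg.trans (mul_le_mul_of_nonneg_right h1 hΓ1.le)
  have hsq : Real.sqrt (4 * ((m:ℝ)+1) / π) = 2 * Real.sqrt ((m:ℝ)+1) / Real.sqrt π := by
    rw [show 4 * ((m:ℝ)+1) / π = (2 * Real.sqrt ((m:ℝ)+1) / Real.sqrt π)^2 by
      rw [div_pow, mul_pow, Real.sq_sqrt (by positivity), Real.sq_sqrt hπ.le]; ring]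
    exact Real.sqrt_sq (by positivity)
  have harg : ((m:ℝ)+1)/2 + 1 = (m:ℝ)/2 + 3/2 := by ring
  rw [hsq, harg, pow_succ]
  have hp : (0:ℝ) < Real.sqrt π := Real.sqrt_pos.mpr hπ
  have hpm : (0:ℝ) ≤ Real.sqrt π ^ m := by positivity
  have ha : (0:ℝ) ≤ Real.sqrt ((m:ℝ)+1) := Real.sqrt_nonneg _
  have hRHS : t * (2 * Real.sqrt ((m:ℝ)+1) / Real.sqrt π)
        * (Real.sqrt π ^ m * Real.sqrt π / Gamma ((m:ℝ)/2 + 3/2))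
      = 2 * t * Real.sqrt ((m:ℝ)+1) * Real.sqrt π ^ m / Gamma ((m:ℝ)/2 + 3/2) := by
    field_simp
  rw [show 2*t * (Real.sqrt π ^ m / Gamma ((m:ℝ)/2 + 1))
      = 2*t*Real.sqrt π ^ m / Gamma ((m:ℝ)/2+1) by ring,
    hRHS, div_le_div_iff₀ hΓ1 hΓ2]
  nlinarith [mul_le_mul_of_nonneg_left hg2
    (mul_nonneg (mul_nonneg (by linarith : (0:ℝ) ≤ 2*t) hpm) (by norm_num : (0:ℝ) ≤ 1))]

lemma slab_volume_le_aux (m : ℕ) (w : EuclideanSpace ℝ (Fin (m+1))) (hw : ‖w‖ = 1)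
    (t : ℝ) :
    volume {x : EuclideanSpace ℝ (Fin (m+1)) | ‖x‖ ≤ 1 ∧ |(inner ℝ w x : ℝ)| ≤ t}
      ≤ ENNReal.ofReal (2*t) * volume (Metric.closedBall (0 : EuclideanSpace ℝ (Fin m)) 1) := by
  obtain ⟨b, hb0⟩ : ∃ b : OrthonormalBasis (Fin (m+1)) ℝ (EuclideanSpace ℝ (Fin (m+1))),
      b 0 = w := by
    have hcard : Module.finrank ℝ (EuclideanSpace ℝ (Fin (m+1))) = Fintype.card (Fin (m+1)) := by
      simp [finrank_euclideanSpace]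
    have horth : Orthonormal ℝ (({0} : Set (Fin (m+1))).restrict (fun _ => w)) := by
      constructor
      · intro i; exact hw
      · intro i j hij
        have hi : (i : Fin (m+1)) = 0 := i.2
        have hj : (j : Fin (m+1)) = 0 := j.2
        exact absurd (Subtype.ext (hi.trans hj.symm)) hij
    obtain ⟨b, hb⟩ := horth.exists_orthonormalBasis_extension_of_card_eq hcard
    exact ⟨b, hb 0 rfl⟩
  set S' : Set (EuclideanSpace ℝ (Fin (m+1))) := {y | ‖y‖ ≤ 1 ∧ |y 0| ≤ t} with hS'
  have hS'meas : MeasurableSet S' := by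
    refine ((isClosed_le (continuous_norm) continuous_const).inter ?_).measurableSet
    exact isClosed_le ((EuclideanSpace.proj (0 : Fin (m+1))).continuous.abs) continuous_const
  have hpre : {x : EuclideanSpace ℝ (Fin (m+1)) | ‖x‖ ≤ 1 ∧ |(inner ℝ w x : ℝ)| ≤ t}
      = b.repr ⁻¹' S' := by
    ext x
    simp only [Set.mem_setOf_eq, Set.mem_preimage, hS', b.repr.norm_map]
    rw [b.repr_apply_apply x 0, hb0]
  rw [hpre, b.measurePreserving_repr.measure_preimage hS'meas.nullMeasurableSet]
  rw [← ((EuclideanSpace.volume_preserving_symm_measurableEquiv_toLp (Fin (m+1))).symm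
      ((MeasurableEquiv.toLp 2 (Fin (m+1) → ℝ)).symm)).measure_preimage
      hS'meas.nullMeasurableSet]
  set A : Set (Fin (m+1) → ℝ) := ((MeasurableEquiv.toLp 2 (Fin (m+1) → ℝ)).symm).symm ⁻¹' S'
    with hA
  set B : Set (Fin m → ℝ) := {g | ∑ j, (g j)^2 ≤ 1} with hB
  have hBmeas : MeasurableSet B := by
    refine isClosed_le ?_ continuous_const |>.measurableSet
    exact continuous_finset_sum _ fun j _ => (continuous_apply j).pow 2
  have hsub : A ⊆ (MeasurableEquiv.piFinSuccAbove (fun _ => ℝ) 0) ⁻¹'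
      ((Set.Icc (-t) t) ×ˢ B) := by
    intro f hf
    obtain ⟨hf1, hf2⟩ := hf
    have happ : ∀ i, (((MeasurableEquiv.toLp 2 (Fin (m+1) → ℝ)).symm).symm f) i = f i := fun _ => rfl
    rw [EuclideanSpace.norm_eq] at hf1
    simp only [happ, Real.norm_eq_abs, sq_abs] at hf1 hf2
    have hsum : ∑ i, (f i)^2 ≤ 1 := by
      have h0 : (0:ℝ) ≤ ∑ i, (f i)^2 := Finset.sum_nonneg fun i _ => sq_nonneg _
      nlinarith [Real.sq_sqrt h0, Real.sqrt_nonneg (∑ i, (f i)^2)]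
    constructor
    · exact Set.mem_Icc.mpr (abs_le.mp hf2)
    · show ∑ j, (f ((0:Fin (m+1)).succAbove j))^2 ≤ 1
      calc ∑ j, (f ((0:Fin (m+1)).succAbove j))^2
          ≤ (f 0)^2 + ∑ j, (f ((0:Fin (m+1)).succAbove j))^2 := by nlinarith [sq_nonneg (f 0)]
        _ = ∑ i, (f i)^2 := (Fin.sum_univ_succAbove (fun i => (f i)^2) 0).symm
        _ ≤ 1 := hsum
  calc volume A ≤ volume ((MeasurableEquiv.piFinSuccAbove (fun _ => ℝ) 0) ⁻¹'
        ((Set.Icc (-t) t) ×ˢ B)) := measure_mono hsub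
    _ = (volume.prod volume) ((Set.Icc (-t) t) ×ˢ B) := by
        rw [(volume_preserving_piFinSuccAbove (fun _ : Fin (m+1) => ℝ) 0).measure_preimage
          ((measurableSet_Icc.prod hBmeas).nullMeasurableSet)]
        rfl
    _ = ENNReal.ofReal (2*t) * volume B := by
        rw [Measure.prod_prod, Real.volume_Icc]
        congr 1
        rw [show t - -t = 2*t by ring]
    _ = ENNReal.ofReal (2*t) * volume (Metric.closedBall (0 : EuclideanSpace ℝ (Fin m)) 1) := by
        congr 1
        rw [← ((EuclideanSpace.volume_preserving_symm_measurableEquiv_toLp (Fin m))).measure_preimage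
          hBmeas.nullMeasurableSet]
        congr 1
        ext y
        have happ : ∀ i, ((MeasurableEquiv.toLp 2 (Fin m → ℝ)).symm) y i = y i := fun _ => rfl
        simp only [Set.mem_preimage, hB, Set.mem_setOf_eq, happ, Metric.mem_closedBall,
          dist_zero_right, EuclideanSpace.norm_eq, Real.norm_eq_abs, sq_abs]
        exact (Real.sqrt_le_one).symm

lemma slab_volume_bound_aux (m : ℕ) (hm : 0 < m) (w : EuclideanSpace ℝ (Fin (m+1)))
    (hw : ‖w‖ = 1) (t : ℝ) (ht : 0 ≤ t) :
    volume {x : EuclideanSpace ℝ (Fin (m+1)) | ‖x‖ ≤ 1 ∧ |(inner ℝ w x : ℝ)| ≤ t}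
      ≤ ENNReal.ofReal (t * Real.sqrt (4 * ((m:ℝ)+1) / π))
        * volume (Metric.closedBall (0 : EuclideanSpace ℝ (Fin (m+1))) 1) := by
  haveI : Nonempty (Fin m) := ⟨⟨0, hm⟩⟩
  refine (slab_volume_le_aux m w hw t).trans ?_
  rw [EuclideanSpace.volume_closedBall, EuclideanSpace.volume_closedBall]
  simp only [Fintype.card_fin, ENNReal.ofReal_one, one_pow, one_mul]
  rw [← ENNReal.ofReal_mul (by linarith), ← ENNReal.ofReal_mul (by positivity)]
  apply ENNReal.ofReal_le_ofReal
  push_cast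
  exact real_ratio_aux m t ht
/-- for nested margin-based regions in the unit ball under the uniform
distribution, the total mass of the per-round non-abstention regions is at least
1 − (min_i t̂_i) √(4d/π). -/
theorem sum_prob_auto_labeled_regions_lower_bound
    (d : ℕ) (hd : 2 ≤ d)
    -- P is the uniform distribution on the unit ball of ℝ^d
    (P : Measure (EuclideanSpace ℝ (Fin d)))
    (hP : P = ProbabilityTheory.cond volume (Metric.closedBall 0 1))
    (k : ℕ) (hk : 0 < k)
    (w : ℕ → EuclideanSpace ℝ (Fin d)) (t : ℕ → ℝ)
    (hw : ∀ i < k, ‖w i‖ = 1) (ht : ∀ i < k, t i ∈ Set.Icc (0 : ℝ) 1)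
    -- the nested regions 𝒳^{(i)} (0-indexed: region 0 = 𝒳 = unit ball)
    (region : ℕ → Set (EuclideanSpace ℝ (Fin d)))
    (hreg0 : region 0 = Metric.closedBall 0 1)
    (hregS : ∀ i, region (i + 1) = {x ∈ region i | |(inner ℝ (w i) x : ℝ)| < t i}) :
    1 - ((Finset.range k).inf' (Finset.nonempty_range_iff.mpr hk.ne') t)
          * Real.sqrt (4 * (d : ℝ) / Real.pi)
      ≤ ∑ i ∈ Finset.range k,
          (P (region i ∩ {x | t i ≤ |(inner ℝ (w i) x : ℝ)|})).toReal := by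
  obtain ⟨m, rfl⟩ : ∃ m, d = m + 1 := ⟨d - 1, by omega⟩
  have hm : 0 < m := by omega
  subst hP
  set B : Set (EuclideanSpace ℝ (Fin (m+1))) := Metric.closedBall 0 1 with hBdef
  set V : ENNReal := volume B with hVdef
  have hV0 : V ≠ 0 := by
    simp only [hVdef, hBdef]
    exact (Metric.measure_closedBall_pos volume _ one_pos).ne'
  have hVtop : V ≠ ⊤ := by
    simp only [hVdef, hBdef]
    exact measure_closedBall_lt_top.ne
  set P : Measure (EuclideanSpace ℝ (Fin (m+1))) := ProbabilityTheory.cond volume B with hPdef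
  have hPapp : ∀ A : Set (EuclideanSpace ℝ (Fin (m+1))), P A = V⁻¹ * volume (B ∩ A) :=
    fun A => ProbabilityTheory.cond_apply measurableSet_closedBall volume A
  set A : ℕ → Set (EuclideanSpace ℝ (Fin (m+1))) :=
    fun i => region i ∩ {x | t i ≤ |(inner ℝ (w i) x : ℝ)|} with hAdef
  -- region monotonicity and containment
  have hmono : ∀ i, region (i+1) ⊆ region i := by
    intro i; rw [hregS]; exact Set.sep_subset _ _
  have hanti : Antitone region := antitone_nat_of_succ_le hmono
  have hsubB : ∀ i, region i ⊆ B := by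
    intro i
    have := hanti (Nat.zero_le i)
    rwa [hreg0] at this
  -- B \ region n is covered by the A i
  have hdiff : ∀ n, B \ region n ⊆ ⋃ i ∈ Finset.range n, A i := by
    intro n
    induction n with
    | zero => rw [hreg0]; simp
    | succ n ih =>
      intro x hx
      obtain ⟨hxB, hxn⟩ := hx
      by_cases hxr : x ∈ region n
      · refine Set.mem_biUnion (Finset.mem_range.mpr n.lt_succ_self) ?_
        refine ⟨hxr, ?_⟩
        simp only [Set.mem_setOf_eq]
        by_contra hlt
        exact hxn ((hregS n) ▸ ⟨hxr, not_le.mp hlt⟩)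
      · have hmem := ih ⟨hxB, hxr⟩
        obtain ⟨i, hi, hmemi⟩ := Set.mem_iUnion₂.mp hmem
        exact Set.mem_biUnion (Finset.mem_range.mpr (by
          exact (Finset.mem_range.mp hi).trans n.lt_succ_self)) hmemi
  -- main ENNReal inequality
  have hPB : P B = 1 := by
    rw [hPapp, Set.inter_self, ← hVdef, ENNReal.inv_mul_cancel hV0 hVtop]
  have hPle1 : ∀ S : Set (EuclideanSpace ℝ (Fin (m+1))), P S ≤ 1 := by
    intro S
    rw [hPapp]
    calc V⁻¹ * volume (B ∩ S) ≤ V⁻¹ * V := by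
          gcongr
          exact measure_mono Set.inter_subset_left
      _ = 1 := ENNReal.inv_mul_cancel hV0 hVtop
  have hmain : (1:ENNReal) ≤ P (region k) + ∑ i ∈ Finset.range k, P (A i) := by
    rw [← hPB]
    calc P B ≤ P (region k ∪ ⋃ i ∈ Finset.range k, A i) := by
          apply measure_mono
          intro x hxB
          by_cases hxr : x ∈ region k
          · exact Or.inl hxr
          · exact Or.inr (hdiff k ⟨hxB, hxr⟩)
      _ ≤ P (region k) + P (⋃ i ∈ Finset.range k, A i) := measure_union_le _ _
      _ ≤ P (region k) + ∑ i ∈ Finset.range k, P (A i) := by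
          gcongr
          exact measure_biUnion_finset_le _ _
  -- the minimizing index
  obtain ⟨j, hjmem, hjeq⟩ := Finset.exists_mem_eq_inf' (Finset.nonempty_range_iff.mpr hk.ne') t
  have hjk : j < k := Finset.mem_range.mp hjmem
  have htj := ht j hjk
  -- bound P (region k)
  set c : ℝ := t j * Real.sqrt (4 * ((m:ℝ)+1) / Real.pi) with hcdef
  have hc0 : 0 ≤ c := by
    apply mul_nonneg htj.1 (Real.sqrt_nonneg _)
  have hPreg : P (region k) ≤ ENNReal.ofReal c := by
    rw [hPapp]
    have hsub : B ∩ region k ⊆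
        {x : EuclideanSpace ℝ (Fin (m+1)) | ‖x‖ ≤ 1 ∧ |(inner ℝ (w j) x : ℝ)| ≤ t j} := by
      rintro x ⟨hxB, hxr⟩
      constructor
      · rwa [hBdef, Metric.mem_closedBall, dist_zero_right] at hxB
      · have hxj : x ∈ region (j+1) := hanti hjk hxr
        rw [hregS j] at hxj
        exact le_of_lt hxj.2
    calc V⁻¹ * volume (B ∩ region k)
        ≤ V⁻¹ * (ENNReal.ofReal c * V) := by
          gcongr
          refine (measure_mono hsub).trans ?_
          exact slab_volume_bound_aux m hm (w j) (hw j hjk) (t j) htj.1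
      _ = ENNReal.ofReal c * (V⁻¹ * V) := by ring
      _ = ENNReal.ofReal c := by rw [ENNReal.inv_mul_cancel hV0 hVtop, mul_one]
  -- pass to the reals
  have hSne : ∀ i ∈ Finset.range k, P (A i) ≠ ⊤ :=
    fun i _ => (lt_of_le_of_lt (hPle1 _) ENNReal.one_lt_top).ne
  have hsumne : ∑ i ∈ Finset.range k, P (A i) ≠ ⊤ := by
    rw [← lt_top_iff_ne_top]
    exact ENNReal.sum_lt_top.mpr fun i hi => lt_top_iff_ne_top.mpr (hSne i hi)
  have hmain2 : (1:ENNReal) ≤ ENNReal.ofReal c + ∑ i ∈ Finset.range k, P (A i) := by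
    refine hmain.trans ?_
    gcongr
  have hreal := ENNReal.toReal_mono (by
    exact ENNReal.add_ne_top.mpr ⟨ENNReal.ofReal_ne_top, hsumne⟩) hmain2
  rw [ENNReal.toReal_one, ENNReal.toReal_add ENNReal.ofReal_ne_top hsumne,
    ENNReal.toReal_ofReal hc0, ENNReal.toReal_sum hSne] at hreal
  rw [hjeq]
  push_cast
  linarith
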